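/- Suppose min_{j∈J} T_j > 1. Then the system is uniformly persistent with respect to the pair (X₀, ∂X₀): there exists δ > 0 such that every solution of the within-host bacterial dynamics system with initial datum in X₀ (i.e., a nonnegative initial datum in Ω with positive total bacterial population) satisfies liminf_{t→∞} (N_s(t)+N_m(t)+N_p(t)+N_{m.p}(t)) ≥ δ. -/

import Mathlib

open Filter Set Matrix

/-- Parameters of the within-host bacterial dynamics system:
`Lam` = Λ (nutrient inflow), `d` = nutrient washout rate, `ds,dm,dp,dmp` = death
rates `d_j`, `bs,bm,bp,bmp` = consumption rates `β_j`, `ts,tm,tp,tmp` = conversion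
factors `τ_j`, `es,em,ep,emp` = mutation ratios `ε_j`, `th` = segregation ratio θ,
`al` = HGT flux α, and `aH, bH` the Beddington–DeAngelis constants. -/
structure ModelParams where
  Lam : ℝ
  d : ℝ
  ds : ℝ
  dm : ℝ
  dp : ℝ
  dmp : ℝ
  bs : ℝ
  bm : ℝ
  bp : ℝ
  bmp : ℝ
  ts : ℝ
  tm : ℝ
  tp : ℝ
  tmp : ℝ
  es : ℝ
  em : ℝ
  ep : ℝ
  emp : ℝ
  th : ℝ
  al : ℝ
  aH : ℝ
  bH : ℝ

/-- Right-hand side of the ODE system, with state `x = (B, N_s, N_m, N_p, N_{m.p})`. -/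
noncomputable def rhs (p : ModelParams) (x : Fin 5 → ℝ) : Fin 5 → ℝ :=
  ![p.Lam - p.d * x 0 - x 0 * (p.bs * x 1 + p.bm * x 2 + p.bp * x 3 + p.bmp * x 4),
    p.ts * p.bs * (1 - p.es) * x 0 * x 1 - p.ds * x 1 + p.em * p.tm * p.bm * x 0 * x 2
      + p.th * p.tp * p.bp * x 0 * x 3
      - (p.al / (p.aH + p.bH * (x 1 + x 2 + x 3 + x 4))) * x 1 * (x 3 + x 4),
    p.tm * p.bm * (1 - p.em) * x 0 * x 2 - p.dm * x 2 + p.es * p.ts * p.bs * x 0 * x 1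
      + p.th * p.tmp * p.bmp * x 0 * x 4
      - (p.al / (p.aH + p.bH * (x 1 + x 2 + x 3 + x 4))) * x 2 * (x 3 + x 4),
    p.tp * p.bp * (1 - p.th) * (1 - p.ep) * x 0 * x 3 - p.dp * x 3
      + p.emp * (1 - p.th) * p.tmp * p.bmp * x 0 * x 4
      + (p.al / (p.aH + p.bH * (x 1 + x 2 + x 3 + x 4))) * x 1 * (x 3 + x 4),
    p.tmp * p.bmp * (1 - p.th) * (1 - p.emp) * x 0 * x 4 - p.dmp * x 4
      + p.ep * (1 - p.th) * p.tp * p.bp * x 0 * x 3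
      + (p.al / (p.aH + p.bH * (x 1 + x 2 + x 3 + x 4))) * x 2 * (x 3 + x 4)]

/-- Natural hypotheses on the parameters. -/
def ModelParams.Valid (p : ModelParams) : Prop :=
  0 < p.Lam ∧ 0 < p.d ∧ 0 < p.ds ∧ 0 < p.dm ∧ 0 < p.dp ∧ 0 < p.dmp ∧
  0 ≤ p.bs ∧ 0 ≤ p.bm ∧ 0 ≤ p.bp ∧ 0 ≤ p.bmp ∧
  0 ≤ p.ts ∧ 0 ≤ p.tm ∧ 0 ≤ p.tp ∧ 0 ≤ p.tmp ∧
  p.es ∈ Set.Ioo (0:ℝ) 1 ∧ p.em ∈ Set.Ioo (0:ℝ) 1 ∧ p.ep ∈ Set.Ioo (0:ℝ) 1 ∧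
  p.emp ∈ Set.Ioo (0:ℝ) 1 ∧ p.th ∈ Set.Ioo (0:ℝ) 1 ∧
  0 ≤ p.al ∧ 0 ≤ p.aH ∧ 0 ≤ p.bH ∧ 0 < p.aH + p.bH

/-- `x : ℝ → Fin 5 → ℝ` is a global-in-time (for `t ≥ 0`) solution of the system. -/
noncomputable def IsSolution (p : ModelParams) (x : ℝ → Fin 5 → ℝ) : Prop :=
  ∀ t : ℝ, 0 ≤ t → ∀ i : Fin 5, HasDerivAt (fun s => x s i) (rhs p (x t) i) t

/-- Uniform persistence: if `min_j T_j > 1` then there is a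
`δ > 0` such that every nonnegative solution with initial datum in
`X₀ = {ω ∈ Ω : N_s+N_m+N_p+N_{m.p} > 0}` (where
`Ω = {ω ∈ ℝ⁵₊ : τmax·B + N_s+N_m+N_p+N_{m.p} ≤ K}`) satisfies
`liminf_{t→∞} (N_s+N_m+N_p+N_{m.p})(t) ≥ δ`. -/


lemma mono_aux {g g' : ℝ → ℝ} {a b : ℝ} (hab : a ≤ b)
    (hd : ∀ u ∈ Set.Icc a b, HasDerivAt g (g' u) u)
    (h0 : ∀ u ∈ Set.Icc a b, 0 ≤ g' u) : g a ≤ g b := by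
  have hmono : MonotoneOn g (Set.Icc a b) := by
    apply monotoneOn_of_deriv_nonneg (convex_Icc a b)
    · exact fun u hu => ((hd u hu).continuousAt).continuousWithinAt
    · intro u hu
      rw [interior_Icc] at hu
      exact ((hd u (Set.Ioo_subset_Icc_self hu)).differentiableAt).differentiableWithinAt
    · intro u hu
      rw [interior_Icc] at hu
      rw [(hd u (Set.Ioo_subset_Icc_self hu)).deriv]
      exact h0 u (Set.Ioo_subset_Icc_self hu)
  exact hmono (Set.left_mem_Icc.2 hab) (Set.right_mem_Icc.2 hab) hab

lemma expAt (r u : ℝ) : HasDerivAt (fun y : ℝ => Real.exp (r * y)) (r * Real.exp (r * u)) u := by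
  have := ((hasDerivAt_id u).const_mul r).exp
  simp only [id_eq, mul_one] at this
  exact this.congr_deriv (mul_comm _ _)

lemma expGrowth_aux {f f' : ℝ → ℝ} {a b r : ℝ} (hab : a ≤ b)
    (hd : ∀ u ∈ Set.Icc a b, HasDerivAt f (f' u) u)
    (h : ∀ u ∈ Set.Icc a b, r * f u ≤ f' u) :
    f a * Real.exp (r * (b - a)) ≤ f b := by
  have key : f a * Real.exp (-r * a) ≤ f b * Real.exp (-r * b) := by
    apply mono_aux (g := fun u => f u * Real.exp (-r * u))
      (g' := fun u => f' u * Real.exp (-r * u) + f u * (-r * Real.exp (-r * u))) hab ?_ ?_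
    · intro u hu
      exact (hd u hu).mul (expAt (-r) u)
    · intro u hu
      have h1 := h u hu
      have h2 : (0:ℝ) < Real.exp (-r * u) := Real.exp_pos _
      show (0:ℝ) ≤ f' u * Real.exp (-r * u) + f u * (-r * Real.exp (-r * u))
      nlinarith [mul_nonneg (sub_nonneg.2 h1) h2.le]
  have e1 : Real.exp (-r * a) * Real.exp (r * b) = Real.exp (r * (b - a)) := by
    rw [← Real.exp_add]; ring_nf
  have e2 : Real.exp (-r * b) * Real.exp (r * b) = 1 := by
    rw [← Real.exp_add]; ring_nf; exact Real.exp_zero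
  have := mul_le_mul_of_nonneg_right key (Real.exp_pos (r * b)).le
  rw [mul_assoc, mul_assoc, e1, e2, mul_one] at this
  exact this

lemma linODE_lower_aux {f f' : ℝ → ℝ} {a b L c : ℝ} (hab : a ≤ b) (hc : 0 < c)
    (hd : ∀ u ∈ Set.Icc a b, HasDerivAt f (f' u) u)
    (h : ∀ u ∈ Set.Icc a b, L - c * f u ≤ f' u) :
    L / c * (1 - Real.exp (-(c * (b - a)))) + f a * Real.exp (-(c * (b - a))) ≤ f b := by
  have key : (f a - L / c) * Real.exp (c * a) ≤ (f b - L / c) * Real.exp (c * b) := by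
    apply mono_aux (g := fun u => (f u - L / c) * Real.exp (c * u))
      (g' := fun u => f' u * Real.exp (c * u) + (f u - L / c) * (c * Real.exp (c * u))) hab ?_ ?_
    · intro u hu
      exact ((hd u hu).sub_const _).mul (expAt c u)
    · intro u hu
      have h1 := h u hu
      have h2 : (0:ℝ) < Real.exp (c * u) := Real.exp_pos _
      have h3 : c * (L / c) = L := by field_simp
      show (0:ℝ) ≤ f' u * Real.exp (c * u) + (f u - L / c) * (c * Real.exp (c * u))
      nlinarith [mul_nonneg (sub_nonneg.2 h1) h2.le]
  have e1 : Real.exp (c * a) * Real.exp (-(c * b)) = Real.exp (-(c * (b - a))) := by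
    rw [← Real.exp_add]; ring_nf
  have e2 : Real.exp (c * b) * Real.exp (-(c * b)) = 1 := by
    rw [← Real.exp_add]; ring_nf; exact Real.exp_zero
  have h4 := mul_le_mul_of_nonneg_right key (Real.exp_pos (-(c * b))).le
  rw [mul_assoc, mul_assoc, e1, e2, mul_one] at h4
  nlinarith [h4]

lemma linODE_upper_aux {f f' : ℝ → ℝ} {a b L m : ℝ} (hab : a ≤ b) (hm : 0 < m)
    (hd : ∀ u ∈ Set.Icc a b, HasDerivAt f (f' u) u)
    (h : ∀ u ∈ Set.Icc a b, f' u ≤ L - m * f u) (h0 : f a ≤ L / m) : f b ≤ L / m := by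
  have key : (L / m - f a) * Real.exp (m * a) ≤ (L / m - f b) * Real.exp (m * b) := by
    apply mono_aux (g := fun u => (L / m - f u) * Real.exp (m * u))
      (g' := fun u => -f' u * Real.exp (m * u) + (L / m - f u) * (m * Real.exp (m * u))) hab ?_ ?_
    · intro u hu
      exact ((hasDerivAt_const u (L/m)).sub (hd u hu)).mul (expAt m u) |>.congr_deriv (by simp only [Pi.sub_apply]; ring)
    · intro u hu
      have h1 := h u hu
      have h2 : (0:ℝ) < Real.exp (m * u) := Real.exp_pos _
      have h3 : m * (L / m) = L := by field_simp
      show (0:ℝ) ≤ -f' u * Real.exp (m * u) + (L / m - f u) * (m * Real.exp (m * u))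
      nlinarith [mul_nonneg (sub_nonneg.2 h1) h2.le]
  have h2 : (0:ℝ) < Real.exp (m * b) := Real.exp_pos _
  have h3 : (0:ℝ) < Real.exp (m * a) := Real.exp_pos _
  nlinarith [key, mul_nonneg (sub_nonneg.2 h0) h3.le]
set_option maxHeartbeats 1000000 in
theorem uniform_persistence
    (p : ModelParams) (hp : p.Valid)
    (B0 Tmin τmax dmin K : ℝ) (hB0 : B0 = p.Lam / p.d)
    (hT : Tmin = min (min (B0 * p.ts * p.bs / p.ds) (B0 * p.tm * p.bm / p.dm))
                     (min (B0 * p.tp * p.bp / p.dp) (B0 * p.tmp * p.bmp / p.dmp)))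
    (hτmax : τmax = max (max p.ts p.tm) (max p.tp p.tmp))
    (hdmin : dmin = min (min p.ds p.dm) (min p.dp p.dmp))
    (hK : K = p.Lam * τmax / min p.d dmin)
    (hTgt : 1 < Tmin) :
    ∃ δ : ℝ, 0 < δ ∧
      ∀ x : ℝ → Fin 5 → ℝ, IsSolution p x →
        (∀ t : ℝ, 0 ≤ t → ∀ i, 0 ≤ x t i) →
        (τmax * x 0 0 + (x 0 1 + x 0 2 + x 0 3 + x 0 4) ≤ K) →
        (0 < x 0 1 + x 0 2 + x 0 3 + x 0 4) →
        δ ≤ Filter.liminf (fun t => x t 1 + x t 2 + x t 3 + x t 4) Filter.atTop := by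
  obtain ⟨hΛ, hd, hds, hdm, hdp, hdmp, hbs, hbm, hbp, hbmp, hts, htm, htp, htmp,
    hes, hem, hep, hemp, hth, hal, haH, hbH, haHbH⟩ := hp
  have hB0pos : 0 < B0 := hB0 ▸ div_pos hΛ hd
  have hΛB0 : p.Lam = p.d * B0 := by rw [hB0]; field_simp
  -- threshold facts
  have hT1 : 1 < B0 * p.ts * p.bs / p.ds :=
    lt_of_lt_of_le hTgt (hT ▸ ((min_le_left _ _).trans (min_le_left _ _)))
  have hT2 : 1 < B0 * p.tm * p.bm / p.dm :=
    lt_of_lt_of_le hTgt (hT ▸ ((min_le_left _ _).trans (min_le_right _ _)))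
  have hT3 : 1 < B0 * p.tp * p.bp / p.dp :=
    lt_of_lt_of_le hTgt (hT ▸ ((min_le_right _ _).trans (min_le_left _ _)))
  have hT4 : 1 < B0 * p.tmp * p.bmp / p.dmp :=
    lt_of_lt_of_le hTgt (hT ▸ ((min_le_right _ _).trans (min_le_right _ _)))
  set tbs := p.ts * p.bs with htbs_def
  set tbm := p.tm * p.bm with htbm_def
  set tbp := p.tp * p.bp with htbp_def
  set tbmp := p.tmp * p.bmp with htbmp_def
  have hTs : p.ds < B0 * tbs := by rw [htbs_def, ← mul_assoc]; exact (one_lt_div hds).1 hT1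
  have hTm : p.dm < B0 * tbm := by rw [htbm_def, ← mul_assoc]; exact (one_lt_div hdm).1 hT2
  have hTp : p.dp < B0 * tbp := by rw [htbp_def, ← mul_assoc]; exact (one_lt_div hdp).1 hT3
  have hTmp : p.dmp < B0 * tbmp := by rw [htbmp_def, ← mul_assoc]; exact (one_lt_div hdmp).1 hT4
  have htbs : 0 < tbs := by
    by_contra h
    push_neg at h
    linarith only [mul_nonneg hB0pos.le (neg_nonneg.2 h), hTs, hds]
  have htbm : 0 < tbm := by
    by_contra h
    push_neg at h
    linarith only [mul_nonneg hB0pos.le (neg_nonneg.2 h), hTm, hdm]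
  have htbp : 0 < tbp := by
    by_contra h
    push_neg at h
    linarith only [mul_nonneg hB0pos.le (neg_nonneg.2 h), hTp, hdp]
  have htbmp : 0 < tbmp := by
    by_contra h
    push_neg at h
    linarith only [mul_nonneg hB0pos.le (neg_nonneg.2 h), hTmp, hdmp]
  -- constants
  set μ := max (max (p.ds / tbs) (p.dm / tbm)) (max (p.dp / tbp) (p.dmp / tbmp)) with hμ_def
  have hμB0 : μ < B0 :=
    max_lt (max_lt ((div_lt_iff₀ htbs).2 (by linarith)) ((div_lt_iff₀ htbm).2 (by linarith)))
      (max_lt ((div_lt_iff₀ htbp).2 (by linarith)) ((div_lt_iff₀ htbmp).2 (by linarith)))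
  have hμpos : 0 < μ :=
    lt_of_lt_of_le (div_pos hds htbs) ((le_max_left _ _).trans (le_max_left _ _))
  set Bst := (μ + B0) / 2 with hBst_def
  set B2 := (Bst + B0) / 2 with hB2_def
  have hμBst : μ < Bst := by rw [hBst_def]; linarith
  have hBstB2 : Bst < B2 := by rw [hB2_def]; linarith
  have hB2B0 : B2 < B0 := by rw [hB2_def]; linarith
  have hBstpos : 0 < Bst := by linarith
  have hB2pos : 0 < B2 := by linarith
  set ρ := min (min (Bst * tbs - p.ds) (Bst * tbm - p.dm))
      (min (Bst * tbp - p.dp) (Bst * tbmp - p.dmp)) with hρ_def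
  have hρpos : 0 < ρ := by
    apply lt_min (lt_min ?_ ?_) (lt_min ?_ ?_) <;> rw [sub_pos]
    · calc p.ds = p.ds / tbs * tbs := by field_simp
        _ < Bst * tbs := by
          apply mul_lt_mul_of_pos_right _ htbs
          exact lt_of_le_of_lt ((le_max_left _ _).trans (le_max_left _ _)) hμBst
    · calc p.dm = p.dm / tbm * tbm := by field_simp
        _ < Bst * tbm := by
          apply mul_lt_mul_of_pos_right _ htbm
          exact lt_of_le_of_lt ((le_max_right _ _).trans (le_max_left _ _)) hμBst
    · calc p.dp = p.dp / tbp * tbp := by field_simp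
        _ < Bst * tbp := by
          apply mul_lt_mul_of_pos_right _ htbp
          exact lt_of_le_of_lt ((le_max_left _ _).trans (le_max_right _ _)) hμBst
    · calc p.dmp = p.dmp / tbmp * tbmp := by field_simp
        _ < Bst * tbmp := by
          apply mul_lt_mul_of_pos_right _ htbmp
          exact lt_of_le_of_lt ((le_max_right _ _).trans (le_max_right _ _)) hμBst
  set βmax := max (max p.bs p.bm) (max p.bp p.bmp) with hβmax_def
  have hβmaxnn : 0 ≤ βmax := le_trans hbs ((le_max_left _ _).trans (le_max_left _ _))
  set η := p.d * (B0 - B2) / (βmax * B2 + 1) with hη_def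
  have hden : 0 < βmax * B2 + 1 := by positivity
  have hηpos : 0 < η := by
    exact div_pos (mul_pos hd (by linarith only [hBstB2, hB2B0, hμBst])) hden
  set c := p.d + βmax * η with hc_def
  have hcpos : 0 < c := by have := mul_nonneg hβmaxnn hηpos.le; linarith only [this, hd, hc_def]
  have hΛc : B2 ≤ p.Lam / c := by
    rw [le_div_iff₀ hcpos]
    have E : η * (βmax * B2 + 1) = p.d * (B0 - B2) := by
      rw [hη_def]; field_simp
    rw [hΛB0, hc_def]; linarith only [E, hηpos.le]
  set T0 := Real.log (B2 / (B2 - Bst)) / c with hT0_def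
  have hratio : 1 < B2 / (B2 - Bst) := by
    rw [lt_div_iff₀ (by linarith)]; linarith
  have hT0pos : 0 < T0 := div_pos (Real.log_pos hratio) hcpos
  have hexpT0 : Real.exp (-(c * T0)) = (B2 - Bst) / B2 := by
    have : c * T0 = Real.log (B2 / (B2 - Bst)) := by
      rw [hT0_def]; field_simp
    rw [this, Real.exp_neg, Real.exp_log (by positivity), inv_div]
  set dmax := max (max p.ds p.dm) (max p.dp p.dmp) with hdmax_def
  have hdmaxpos : 0 < dmax := lt_of_lt_of_le hds ((le_max_left _ _).trans (le_max_left _ _))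
  set δ := η * Real.exp (-(dmax * T0)) with hδ_def
  have hδpos : 0 < δ := mul_pos hηpos (Real.exp_pos _)
  have hδη : δ < η := by
    rw [hδ_def]
    have h1 : Real.exp (-(dmax * T0)) < 1 :=
      Real.exp_lt_one_iff.2 (neg_lt_zero.2 (mul_pos hdmaxpos hT0pos))
    calc η * Real.exp (-(dmax * T0)) < η * 1 := mul_lt_mul_of_pos_left h1 hηpos
      _ = η := mul_one η
  set m := min p.d dmin with hm_def
  have hmpos : 0 < m := lt_min hd (hdmin ▸ lt_min (lt_min hds hdm) (lt_min hdp hdmp))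
  refine ⟨δ, hδpos, ?_⟩
  intro x hsol hpos hinit hW0
  set W : ℝ → ℝ := fun t => x t 1 + x t 2 + x t 3 + x t 4 with hWf_def
  set Bf : ℝ → ℝ := fun t => x t 0 with hBf_def
  set W' : ℝ → ℝ := fun t => rhs p (x t) 1 + rhs p (x t) 2 + rhs p (x t) 3 + rhs p (x t) 4
    with hW'_def
  have hWval : ∀ t, W t = x t 1 + x t 2 + x t 3 + x t 4 := fun t => rfl
  have hBval : ∀ t, Bf t = x t 0 := fun t => rfl
  have hWd : ∀ t, 0 ≤ t → HasDerivAt W (W' t) t := fun t ht =>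
    (((hsol t ht 1).add (hsol t ht 2)).add (hsol t ht 3)).add (hsol t ht 4)
  have hBd : ∀ t, 0 ≤ t → HasDerivAt Bf (rhs p (x t) 0) t := fun t ht => hsol t ht 0
  have hWid : ∀ t : ℝ, W' t =
      Bf t * (tbs * x t 1 + tbm * x t 2 + tbp * x t 3 + tbmp * x t 4)
        - (p.ds * x t 1 + p.dm * x t 2 + p.dp * x t 3 + p.dmp * x t 4) := by
    intro t
    show rhs p (x t) 1 + rhs p (x t) 2 + rhs p (x t) 3 + rhs p (x t) 4 = _
    rw [hBval, htbs_def, htbm_def, htbp_def, htbmp_def]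
    simp only [rhs, Matrix.cons_val_zero, Matrix.cons_val_one, Matrix.head_cons,
      Matrix.cons_val_two, Matrix.tail_cons, Matrix.cons_val_three, Matrix.cons_val_four]
    ring
  have hBid : ∀ t : ℝ, rhs p (x t) 0 =
      p.Lam - p.d * Bf t - Bf t * (p.bs * x t 1 + p.bm * x t 2 + p.bp * x t 3 + p.bmp * x t 4) := by
    intro t
    rw [hBval]
    simp only [rhs, Matrix.cons_val_zero]
  have hBnn : ∀ t, 0 ≤ t → 0 ≤ Bf t := fun t ht => hpos t ht 0
  have hWnn : ∀ t, 0 ≤ t → 0 ≤ W t := by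
    intro t ht
    rw [hWval]
    have h1 := hpos t ht 1; have h2 := hpos t ht 2
    have h3 := hpos t ht 3; have h4 := hpos t ht 4
    linarith only [h1, h2, h3, h4]
  -- (i) decay estimate
  have hdsmax : p.ds ≤ dmax := (le_max_left _ _).trans (le_max_left _ _)
  have hdmmax : p.dm ≤ dmax := (le_max_right _ _).trans (le_max_left _ _)
  have hdpmax : p.dp ≤ dmax := (le_max_left _ _).trans (le_max_right _ _)
  have hdmpmax : p.dmp ≤ dmax := (le_max_right _ _).trans (le_max_right _ _)
  have hdecay : ∀ t, 0 ≤ t → -dmax * W t ≤ W' t := by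
    intro t ht
    have h1 := hpos t ht 1; have h2 := hpos t ht 2
    have h3 := hpos t ht 3; have h4 := hpos t ht 4
    have hB := hBnn t ht
    have hS : 0 ≤ Bf t * (tbs * x t 1 + tbm * x t 2 + tbp * x t 3 + tbmp * x t 4) :=
      mul_nonneg hB (by
        have := mul_nonneg htbs.le h1; have := mul_nonneg htbm.le h2
        have := mul_nonneg htbp.le h3; have := mul_nonneg htbmp.le h4
        linarith)
    have e1 : p.ds * x t 1 ≤ dmax * x t 1 := mul_le_mul_of_nonneg_right hdsmax h1
    have e2 : p.dm * x t 2 ≤ dmax * x t 2 := mul_le_mul_of_nonneg_right hdmmax h2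
    have e3 : p.dp * x t 3 ≤ dmax * x t 3 := mul_le_mul_of_nonneg_right hdpmax h3
    have e4 : p.dmp * x t 4 ≤ dmax * x t 4 := mul_le_mul_of_nonneg_right hdmpmax h4
    rw [hWid t, hWval t]
    linarith only [hS, e1, e2, e3, e4]
  -- (ii) growth estimate when nutrient is abundant
  have hgrow : ∀ t, 0 ≤ t → Bst ≤ Bf t → ρ * W t ≤ W' t := by
    intro t ht hB
    have h1 := hpos t ht 1; have h2 := hpos t ht 2
    have h3 := hpos t ht 3; have h4 := hpos t ht 4
    have hρ1 : ρ ≤ Bst * tbs - p.ds := (min_le_left _ _).trans (min_le_left _ _)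
    have hρ2 : ρ ≤ Bst * tbm - p.dm := (min_le_left _ _).trans (min_le_right _ _)
    have hρ3 : ρ ≤ Bst * tbp - p.dp := (min_le_right _ _).trans (min_le_left _ _)
    have hρ4 : ρ ≤ Bst * tbmp - p.dmp := (min_le_right _ _).trans (min_le_right _ _)
    have g1 : ρ * x t 1 ≤ (Bf t * tbs - p.ds) * x t 1 := by
      apply mul_le_mul_of_nonneg_right _ h1
      have := mul_le_mul_of_nonneg_right hB htbs.le
      linarith only [hρ1, this]
    have g2 : ρ * x t 2 ≤ (Bf t * tbm - p.dm) * x t 2 := by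
      apply mul_le_mul_of_nonneg_right _ h2
      have := mul_le_mul_of_nonneg_right hB htbm.le
      linarith only [hρ2, this]
    have g3 : ρ * x t 3 ≤ (Bf t * tbp - p.dp) * x t 3 := by
      apply mul_le_mul_of_nonneg_right _ h3
      have := mul_le_mul_of_nonneg_right hB htbp.le
      linarith only [hρ3, this]
    have g4 : ρ * x t 4 ≤ (Bf t * tbmp - p.dmp) * x t 4 := by
      apply mul_le_mul_of_nonneg_right _ h4
      have := mul_le_mul_of_nonneg_right hB htbmp.le
      linarith only [hρ4, this]
    rw [hWid t, hWval t]
    linarith only [g1, g2, g3, g4]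
  -- (iii) nutrient equation lower bound when W is small
  have hbsβ : p.bs ≤ βmax := (le_max_left _ _).trans (le_max_left _ _)
  have hbmβ : p.bm ≤ βmax := (le_max_right _ _).trans (le_max_left _ _)
  have hbpβ : p.bp ≤ βmax := (le_max_left _ _).trans (le_max_right _ _)
  have hbmpβ : p.bmp ≤ βmax := (le_max_right _ _).trans (le_max_right _ _)
  have hBineq : ∀ t, 0 ≤ t → W t ≤ η → p.Lam - c * Bf t ≤ rhs p (x t) 0 := by
    intro t ht hWη
    rw [hBid t, hc_def]
    have h1 := hpos t ht 1; have h2 := hpos t ht 2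
    have h3 := hpos t ht 3; have h4 := hpos t ht 4
    have hB := hBnn t ht
    have s1 : p.bs * x t 1 ≤ βmax * x t 1 := mul_le_mul_of_nonneg_right hbsβ h1
    have s2 : p.bm * x t 2 ≤ βmax * x t 2 := mul_le_mul_of_nonneg_right hbmβ h2
    have s3 : p.bp * x t 3 ≤ βmax * x t 3 := mul_le_mul_of_nonneg_right hbpβ h3
    have s4 : p.bmp * x t 4 ≤ βmax * x t 4 := mul_le_mul_of_nonneg_right hbmpβ h4
    have hWη' : βmax * W t ≤ βmax * η := mul_le_mul_of_nonneg_left hWη hβmaxnn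
    rw [hWval] at hWη'
    have hsum : p.bs * x t 1 + p.bm * x t 2 + p.bp * x t 3 + p.bmp * x t 4 ≤ βmax * η := by
      linarith only [s1, s2, s3, s4, hWη']
    have key : Bf t * (p.bs * x t 1 + p.bm * x t 2 + p.bp * x t 3 + p.bmp * x t 4)
        ≤ Bf t * (βmax * η) := mul_le_mul_of_nonneg_left hsum hB
    linarith only [key]
  -- boundedness : W t ≤ K for all t ≥ 0
  have hτs : p.ts ≤ τmax := hτmax ▸ (le_max_left _ _).trans (le_max_left _ _)
  have hτm : p.tm ≤ τmax := hτmax ▸ (le_max_right _ _).trans (le_max_left _ _)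
  have hτp : p.tp ≤ τmax := hτmax ▸ (le_max_left _ _).trans (le_max_right _ _)
  have hτmp : p.tmp ≤ τmax := hτmax ▸ (le_max_right _ _).trans (le_max_right _ _)
  have hτnn : 0 ≤ τmax := hts.trans hτs
  have hmd : m ≤ p.d := min_le_left _ _
  have hmdmin : m ≤ dmin := min_le_right _ _
  have hmds : m ≤ p.ds := hmdmin.trans (hdmin ▸ (min_le_left _ _).trans (min_le_left _ _))
  have hmdm : m ≤ p.dm := hmdmin.trans (hdmin ▸ (min_le_left _ _).trans (min_le_right _ _))
  have hmdp : m ≤ p.dp := hmdmin.trans (hdmin ▸ (min_le_right _ _).trans (min_le_left _ _))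
  have hmdmp : m ≤ p.dmp := hmdmin.trans (hdmin ▸ (min_le_right _ _).trans (min_le_right _ _))
  have hVK : ∀ t, 0 ≤ t → W t ≤ K := by
    intro t ht
    have hVt : τmax * Bf t + W t ≤ p.Lam * τmax / m := by
      apply linODE_upper_aux (f := fun s => τmax * Bf s + W s)
        (f' := fun u => τmax * rhs p (x u) 0 + W' u) ht hmpos
      · intro u hu
        exact ((hBd u hu.1).const_mul τmax).add (hWd u hu.1)
      · intro u hu
        have hu0 : 0 ≤ u := hu.1
        have h1 := hpos u hu0 1; have h2 := hpos u hu0 2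
        have h3 := hpos u hu0 3; have h4 := hpos u hu0 4
        have hB := hBnn u hu0
        show τmax * rhs p (x u) 0 + W' u ≤ p.Lam * τmax - m * (τmax * Bf u + W u)
        rw [hBid u, hWid u, hWval u]
        have t1 : tbs * x u 1 ≤ τmax * (p.bs * x u 1) := by
          rw [htbs_def]
          have := mul_le_mul_of_nonneg_right (mul_le_mul_of_nonneg_right hτs hbs) h1
          linarith only [this]
        have t2 : tbm * x u 2 ≤ τmax * (p.bm * x u 2) := by
          rw [htbm_def]
          have := mul_le_mul_of_nonneg_right (mul_le_mul_of_nonneg_right hτm hbm) h2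
          linarith only [this]
        have t3 : tbp * x u 3 ≤ τmax * (p.bp * x u 3) := by
          rw [htbp_def]
          have := mul_le_mul_of_nonneg_right (mul_le_mul_of_nonneg_right hτp hbp) h3
          linarith only [this]
        have t4 : tbmp * x u 4 ≤ τmax * (p.bmp * x u 4) := by
          rw [htbmp_def]
          have := mul_le_mul_of_nonneg_right (mul_le_mul_of_nonneg_right hτmp hbmp) h4
          linarith only [this]
        have hq : tbs * x u 1 + tbm * x u 2 + tbp * x u 3 + tbmp * x u 4 ≤
            τmax * (p.bs * x u 1 + p.bm * x u 2 + p.bp * x u 3 + p.bmp * x u 4) := by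
          have e : τmax * (p.bs * x u 1 + p.bm * x u 2 + p.bp * x u 3 + p.bmp * x u 4)
              = τmax * (p.bs * x u 1) + τmax * (p.bm * x u 2) + τmax * (p.bp * x u 3)
                + τmax * (p.bmp * x u 4) := by ring
          linarith only [t1, t2, t3, t4, e]
        have hBq : Bf u * (tbs * x u 1 + tbm * x u 2 + tbp * x u 3 + tbmp * x u 4)
            ≤ Bf u * (τmax * (p.bs * x u 1 + p.bm * x u 2 + p.bp * x u 3 + p.bmp * x u 4)) :=
          mul_le_mul_of_nonneg_left hq hB
        have m1 : m * x u 1 ≤ p.ds * x u 1 := mul_le_mul_of_nonneg_right hmds h1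
        have m2 : m * x u 2 ≤ p.dm * x u 2 := mul_le_mul_of_nonneg_right hmdm h2
        have m3 : m * x u 3 ≤ p.dp * x u 3 := mul_le_mul_of_nonneg_right hmdp h3
        have m4 : m * x u 4 ≤ p.dmp * x u 4 := mul_le_mul_of_nonneg_right hmdmp h4
        have mB : m * (τmax * Bf u) ≤ p.d * (τmax * Bf u) :=
          mul_le_mul_of_nonneg_right hmd (mul_nonneg hτnn hB)
        linarith only [hBq, m1, m2, m3, m4, mB]
      · show τmax * Bf 0 + W 0 ≤ p.Lam * τmax / m
        rw [hBval, hWval, ← hK]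
        exact hinit
    have := mul_nonneg hτnn (hBnn t ht)
    rw [hK]
    linarith only [hVt, this]
  -- exponential decay lower bound
  have hWlow : ∀ a b : ℝ, 0 ≤ a → a ≤ b → W a * Real.exp (-dmax * (b - a)) ≤ W b := by
    intro a b ha hab
    exact expGrowth_aux hab (fun u hu => hWd u (ha.trans hu.1))
      (fun u hu => hdecay u (ha.trans hu.1))
  have hWpos : ∀ t, 0 ≤ t → 0 < W t := by
    intro t ht
    have h := hWlow 0 t le_rfl ht
    have hW0' : 0 < W 0 := hW0
    exact lt_of_lt_of_le (mul_pos hW0' (Real.exp_pos _)) h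
  -- nutrient recovery
  have hBrec : ∀ a b : ℝ, 0 ≤ a → a + T0 ≤ b → (∀ u, u ∈ Set.Icc a b → W u ≤ η) →
      Bst ≤ Bf b := by
    intro a b ha hab hWsmall
    have hab' : a ≤ b := by linarith only [hab, hT0pos]
    have key := linODE_lower_aux (f := Bf) (f' := fun u => rhs p (x u) 0) hab' hcpos
      (fun u hu => hBd u (ha.trans hu.1))
      (fun u hu => hBineq u (ha.trans hu.1) (hWsmall u hu))
    have hBa : 0 ≤ Bf a := hBnn a ha
    have hE : Real.exp (-(c * (b - a))) ≤ Real.exp (-(c * T0)) := by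
      apply Real.exp_le_exp.2
      have := mul_le_mul_of_nonneg_left (show T0 ≤ b - a by linarith only [hab]) hcpos.le
      linarith only [this]
    have hEpos := (Real.exp_pos (-(c * (b - a)))).le
    have h1e : Bst / B2 ≤ 1 - Real.exp (-(c * (b - a))) := by
      rw [hexpT0] at hE
      have heq : Bst / B2 = 1 - (B2 - Bst) / B2 := by field_simp; ring
      linarith only [hE, heq]
    have hfinal : Bst ≤ p.Lam / c * (1 - Real.exp (-(c * (b - a)))) := by
      calc Bst = B2 * (Bst / B2) := by field_simp
        _ ≤ p.Lam / c * (1 - Real.exp (-(c * (b - a)))) :=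
          mul_le_mul hΛc h1e (by positivity) (hB2pos.le.trans hΛc)
    linarith only [key, hfinal, mul_nonneg hBa hEpos]
  -- weak persistence
  have hweak : ∀ t1 : ℝ, 0 ≤ t1 → ∃ t, t1 ≤ t ∧ η < W t := by
    intro t1 ht1
    by_contra hcon
    push_neg at hcon
    set a := t1 + T0 with ha_def
    have ha0 : 0 ≤ a := by rw [ha_def]; linarith only [ht1, hT0pos]
    have hWa : 0 < W a := hWpos a ha0
    have hWaη : W a ≤ η := hcon a (by rw [ha_def]; linarith only [hT0pos])
    set b := a + (Real.log (η / W a) + 1) / ρ with hb_def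
    have hlog : 0 ≤ Real.log (η / W a) := Real.log_nonneg ((one_le_div hWa).2 hWaη)
    have hquot : 0 ≤ (Real.log (η / W a) + 1) / ρ := by positivity
    have hab : a ≤ b := by rw [hb_def]; linarith only [hquot]
    have hBgeq : ∀ u, u ∈ Set.Icc a b → Bst ≤ Bf u := by
      intro u hu
      apply hBrec t1 u ht1 (by rw [ha_def] at hu; exact hu.1)
      intro v hv
      exact hcon v hv.1
    have hg := expGrowth_aux (f := W) (f' := W') (r := ρ) hab
      (fun u hu => hWd u (ha0.trans hu.1))
      (fun u hu => hgrow u (ha0.trans hu.1) (hBgeq u hu))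
    have hbval : ρ * (b - a) = Real.log (η / W a) + 1 := by
      rw [hb_def]; field_simp; ring
    rw [hbval] at hg
    have hexp1 : W a * Real.exp (Real.log (η / W a) + 1) = η * Real.exp 1 := by
      rw [Real.exp_add, Real.exp_log (div_pos hηpos hWa)]
      field_simp
    rw [hexp1] at hg
    have hcontr : W b ≤ η := hcon b (by rw [hb_def, ha_def]; linarith only [hquot, hT0pos])
    have he1 : (1:ℝ) < Real.exp 1 := by
      have := Real.add_one_le_exp (1:ℝ)
      linarith only [this]
    have hηe : η < η * Real.exp 1 := lt_mul_of_one_lt_right hηpos he1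
    linarith only [hg, hcontr, hηe]
  -- main claim
  obtain ⟨t', ht'0, hWt'⟩ : ∃ t, 0 ≤ t ∧ η < W t := hweak 0 le_rfl
  have hmain : ∀ t2, t' ≤ t2 → δ ≤ W t2 := by
    intro t2 ht2
    by_contra hlt
    push_neg at hlt
    set A := Set.Icc t' t2 ∩ W ⁻¹' (Set.Ici η) with hA_def
    have hAne : A.Nonempty := ⟨t', ⟨⟨le_rfl, ht2⟩, hWt'.le⟩⟩
    have hAbdd : BddAbove A := ⟨t2, fun u hu => hu.1.2⟩
    have hAclosed : IsClosed A := by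
      apply ContinuousOn.preimage_isClosed_of_isClosed ?_ isClosed_Icc isClosed_Ici
      intro u hu
      exact ((hWd u (ht'0.trans hu.1)).continuousAt).continuousWithinAt
    set s := sSup A with hs_def
    have hsA : s ∈ A := hAclosed.csSup_mem hAne hAbdd
    have hst' : t' ≤ s := hsA.1.1
    have hs0 : 0 ≤ s := ht'0.trans hst'
    have hst2 : s ≤ t2 := hsA.1.2
    have hsη : η ≤ W s := hsA.2
    have hub : ∀ u, s < u → u ≤ t2 → W u < η := by
      intro u hsu hut2
      by_contra hc
      push_neg at hc
      have hmem : u ∈ A := ⟨⟨hst'.trans hsu.le, hut2⟩, hc⟩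
      exact absurd (le_csSup hAbdd hmem) (not_le.2 hsu)
    have hslt : s < t2 := by
      rcases eq_or_lt_of_le hst2 with h | h
      · exfalso; rw [h] at hsη; linarith only [hsη, hlt, hδη]
      · exact h
    have hWsle : W s ≤ η := by
      by_contra hgt
      push_neg at hgt
      have hca : ContinuousAt W s := (hWd s hs0).continuousAt
      have hmem : W ⁻¹' Set.Ioi η ∈ nhds s := hca (Ioi_mem_nhds hgt)
      obtain ⟨ε, hε, hball⟩ := Metric.mem_nhds_iff.1 hmem
      set u := min (s + ε / 2) ((s + t2) / 2) with hu_def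
      have hsu : s < u := lt_min (by linarith only [hε]) (by linarith only [hslt])
      have hut2 : u ≤ t2 := (min_le_right _ _).trans (by linarith only [hslt])
      have hdist : dist u s < ε := by
        rw [Real.dist_eq, abs_of_nonneg (by linarith only [hsu])]
        have := min_le_left (s + ε / 2) ((s + t2) / 2)
        rw [← hu_def] at this
        linarith only [this, hε]
      have : W u ∈ Set.Ioi η := hball hdist
      exact absurd this (not_lt.2 (hub u hsu hut2).le)
    have hWleη : ∀ u, u ∈ Set.Icc s t2 → W u ≤ η := by
      intro u hu
      rcases eq_or_lt_of_le hu.1 with h | h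
      · rw [← h]; exact hWsle
      · exact (hub u h hu.2).le
    rcases le_or_gt t2 (s + T0) with hcase | hcase
    · -- short excursion
      have h1 := hWlow s t2 hs0 hslt.le
      have hEe : Real.exp (-(dmax * T0)) ≤ Real.exp (-dmax * (t2 - s)) := by
        apply Real.exp_le_exp.2
        have := mul_le_mul_of_nonneg_left (show t2 - s ≤ T0 by linarith only [hcase])
          hdmaxpos.le
        linarith only [this]
      have h2 : δ ≤ W s * Real.exp (-dmax * (t2 - s)) := by
        rw [hδ_def]
        calc η * Real.exp (-(dmax * T0)) ≤ W s * Real.exp (-(dmax * T0)) :=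
              mul_le_mul_of_nonneg_right hsη (Real.exp_pos _).le
          _ ≤ W s * Real.exp (-dmax * (t2 - s)) :=
              mul_le_mul_of_nonneg_left hEe (hWnn s hs0)
      linarith only [h1, h2, hlt]
    · -- long excursion: nutrient recovers, then W grows
      have hmid0 : 0 ≤ s + T0 := by linarith only [hs0, hT0pos]
      have hBgeq : ∀ u, u ∈ Set.Icc (s + T0) t2 → Bst ≤ Bf u := by
        intro u hu
        apply hBrec s u hs0 hu.1
        intro v hv
        exact hWleη v ⟨hv.1, hv.2.trans hu.2⟩
      have hg := expGrowth_aux (f := W) (f' := W') (r := ρ) hcase.le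
        (fun u hu => hWd u (hmid0.trans hu.1))
        (fun u hu => hgrow u (hmid0.trans hu.1) (hBgeq u hu))
      have hE1 : 1 ≤ Real.exp (ρ * (t2 - (s + T0))) :=
        Real.one_le_exp (mul_nonneg hρpos.le (by linarith only [hcase]))
      have h2 : W (s + T0) ≤ W t2 := by
        calc W (s + T0) = W (s + T0) * 1 := (mul_one _).symm
          _ ≤ W (s + T0) * Real.exp (ρ * (t2 - (s + T0))) :=
              mul_le_mul_of_nonneg_left hE1 (hWnn _ hmid0)
          _ ≤ W t2 := hg
      have h3 := hWlow s (s + T0) hs0 (by linarith only [hT0pos])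
      have e : -dmax * (s + T0 - s) = -(dmax * T0) := by ring
      rw [e] at h3
      have h4 : δ ≤ W (s + T0) := by
        rw [hδ_def]
        calc η * Real.exp (-(dmax * T0)) ≤ W s * Real.exp (-(dmax * T0)) :=
              mul_le_mul_of_nonneg_right hsη (Real.exp_pos _).le
          _ ≤ W (s + T0) := h3
      linarith only [h2, h4, hlt]
  -- conclude about the liminf
  have hev : ∀ᶠ t in Filter.atTop, δ ≤ W t :=
    Filter.eventually_atTop.2 ⟨t', fun t ht => hmain t ht⟩
  have hevK : ∀ᶠ t in Filter.atTop, W t ≤ K :=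
    Filter.eventually_atTop.2 ⟨0, fun t ht => hVK t ht⟩
  rw [Filter.liminf_eq]
  apply le_csSup
  · refine ⟨K, fun a ha => ?_⟩
    simp only [Set.mem_setOf_eq] at ha
    obtain ⟨t, h1, h2⟩ := (ha.and hevK).exists
    exact h1.trans h2
  · simpa using hev
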